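/- Let P_α, P, R be symmetric positive definite with P_α ≻ Γᵀ P Γ + R. Let ᾱ, α_ad ∈ ℝ^p with ᾱ ≠ α_ad, and for λ ∈ (0,1) define J̃(λ) = λ² ‖ᾱ − α_ad‖²_{ΓᵀPΓ+R} + (1−λ)² ‖ᾱ − α_ad‖²_{P_α} + ‖α_ad‖²_{P_α} + 2(1−λ) α_adᵀ P_α (ᾱ − α_ad) and J̄ = ‖ᾱ‖²_{P_α}. If α_adᵀ P_α (ᾱ − α_ad) ≥ 0, then J̄ > J̃(λ) for all λ ∈ (0,1). -/

import Mathlib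

open Matrix

lemma symm_dot {p : ℕ} {M : Matrix (Fin p) (Fin p) ℝ} (hM : M.IsHermitian)
    (x y : Fin p → ℝ) : x ⬝ᵥ M.mulVec y = y ⬝ᵥ M.mulVec x := by
  rw [Matrix.dotProduct_mulVec, ← Matrix.mulVec_transpose,
    show Mᵀ = M from by simpa using (congrArg Matrix.transpose hM.eq).symm,
    dotProduct_comm]

/-- The cost comparison in the steady-state optimality argument:
`J̄ > J̃(λ)` for all `λ ∈ (0,1)`. -/
theorem steady_state_cost_contradiction
    {n p : ℕ} (Γ : Matrix (Fin n) (Fin p) ℝ)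
    (P : Matrix (Fin n) (Fin n) ℝ) (R Pα : Matrix (Fin p) (Fin p) ℝ)
    (hP : P.PosDef) (hR : R.PosDef) (hPα : Pα.PosDef)
    (hdom : (Pα - (Γᵀ * P * Γ + R)).PosDef)
    (αbar αad : Fin p → ℝ) (hne : αbar ≠ αad)
    (hvi : 0 ≤ αad ⬝ᵥ Pα.mulVec (αbar - αad)) :
    ∀ lam ∈ Set.Ioo (0 : ℝ) 1,
      (αbar ⬝ᵥ Pα.mulVec αbar) >
        lam ^ 2 * ((αbar - αad) ⬝ᵥ (Γᵀ * P * Γ + R).mulVec (αbar - αad)) +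
          (1 - lam) ^ 2 * ((αbar - αad) ⬝ᵥ Pα.mulVec (αbar - αad)) +
          (αad ⬝ᵥ Pα.mulVec αad) +
          2 * (1 - lam) * (αad ⬝ᵥ Pα.mulVec (αbar - αad)) := by
  intro lam hlam
  obtain ⟨hl0, hl1⟩ := hlam
  set d : Fin p → ℝ := αbar - αad with hd
  have hdne : d ≠ 0 := sub_ne_zero.mpr hne
  have ha : 0 < d ⬝ᵥ Pα.mulVec d := by simpa using hPα.dotProduct_mulVec_pos hdne
  have hq : 0 < d ⬝ᵥ (Pα - (Γᵀ * P * Γ + R)).mulVec d := by simpa using hdom.dotProduct_mulVec_pos hdne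
  have hq' : d ⬝ᵥ (Γᵀ * P * Γ + R).mulVec d < d ⬝ᵥ Pα.mulVec d := by
    rw [Matrix.sub_mulVec, dotProduct_sub] at hq
    linarith
  -- expansion of J̄
  have hexp : αbar ⬝ᵥ Pα.mulVec αbar =
      d ⬝ᵥ Pα.mulVec d + αad ⬝ᵥ Pα.mulVec αad + 2 * (αad ⬝ᵥ Pα.mulVec d) := by
    have hsym := symm_dot hPα.1 d αad
    have hb : αbar = d + αad := by simp [hd]
    rw [hb]
    rw [Matrix.mulVec_add, add_dotProduct, dotProduct_add,
      dotProduct_add]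
    linarith
  rw [hexp]
  nlinarith [mul_pos hl0 (sub_pos.mpr hl1), sq_nonneg lam, sq_nonneg (1 - lam),
    mul_nonneg hl0.le hvi, mul_pos (mul_pos hl0 (sub_pos.mpr hl1)) ha,
    mul_le_mul_of_nonneg_left hq'.le (sq_nonneg lam)]
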